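/- Every h ∈ Ȳ₁ satisfies h(x) ≤ √2 for all x ∈ ℝ; moreover h is differentiable almost everywhere and its almost-everywhere derivative h' satisfies ‖h'‖_{L²(ℝ)} ≤ 4√2. -/

import Mathlib

set_option maxHeartbeats 1000000

open MeasureTheory Set Filter Measure
open scoped ENNReal NNReal

/-- The set `Ȳ₁`: functions `h : ℝ → [0,∞)` that are 2-Lipschitz, non-decreasing on
`(−∞, 0]`, non-increasing on `[0, ∞)`, and with total integral `1`. -/
def MemY1bar (h : ℝ → ℝ) : Prop :=
  (∀ x, 0 ≤ h x) ∧ LipschitzWith 2 h ∧ MonotoneOn h (Set.Iic 0) ∧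
    AntitoneOn h (Set.Ici 0) ∧ (∫ x, h x) = 1


lemma y1_le_sqrt2 (h : ℝ → ℝ) (h0 : ∀ x, 0 ≤ h x) (hlip : LipschitzWith 2 h)
    (hint : (∫ x, h x) = 1) : ∀ x, h x ≤ Real.sqrt 2 := by
  intro x₀
  set M := h x₀ with hM
  rcases le_or_gt M 0 with hM0 | hM0
  · exact hM0.trans (Real.sqrt_nonneg 2)
  have hInt : Integrable h := by
    by_contra hc
    rw [integral_undef hc] at hint; norm_num at hint
  have hcont : Continuous h := hlip.continuous
  -- pointwise lower bound
  have hlb : ∀ y, M - 2 * |y - x₀| ≤ h y := by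
    intro y
    have := hlip.dist_le_mul y x₀
    rw [Real.dist_eq, Real.dist_eq] at this
    have h1 : |h y - M| ≤ 2 * |y - x₀| := by push_cast at this ⊢; linarith [this]
    have := abs_le.1 h1
    linarith [this.1]
  set a := x₀ - M / 2
  set b := x₀ + M / 2
  have hab : a ≤ x₀ := by simp only [a]; linarith
  have hxb : x₀ ≤ b := by simp only [b]; linarith
  have hIi : ∀ c d : ℝ, IntervalIntegrable h volume c d := fun c d => hcont.intervalIntegrable c d
  have key : M ^ 2 / 2 ≤ 1 := by
    have step1 : (∫ y in Set.Ioc a b, h y) ≤ 1 := by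
      rw [← hint]
      exact setIntegral_le_integral hInt (Filter.Eventually.of_forall h0)
    have step2 : (∫ y in a..b, h y) = (∫ y in Set.Ioc a b, h y) :=
      intervalIntegral.integral_of_le (hab.trans hxb)
    have split : (∫ y in a..b, h y) = (∫ y in a..x₀, h y) + (∫ y in x₀..b, h y) :=
      (intervalIntegral.integral_add_adjacent_intervals (hIi a x₀) (hIi x₀ b)).symm
    have low1 : M ^ 2 / 4 ≤ ∫ y in a..x₀, h y := by
      have hle : (∫ y in a..x₀, (M - 2 * x₀ + 2 * y)) ≤ ∫ y in a..x₀, h y := by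
        apply intervalIntegral.integral_mono_on hab
          (by apply Continuous.intervalIntegrable; continuity) (hIi a x₀)
        intro y hy
        have := hlb y
        have hyx : |y - x₀| = x₀ - y := by
          rw [abs_of_nonpos (by linarith [hy.2])]; ring
        rw [hyx] at this; linarith
      have hcalc : (∫ y in a..x₀, (M - 2 * x₀ + 2 * y)) = M ^ 2 / 4 := by
        rw [intervalIntegral.integral_add (by apply Continuous.intervalIntegrable; continuity)
          (by apply Continuous.intervalIntegrable; continuity),
          intervalIntegral.integral_const, intervalIntegral.integral_const_mul,
          integral_id]
        simp only [smul_eq_mul, a]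
        ring
      linarith
    have low2 : M ^ 2 / 4 ≤ ∫ y in x₀..b, h y := by
      have hle : (∫ y in x₀..b, (M + 2 * x₀ - 2 * y)) ≤ ∫ y in x₀..b, h y := by
        apply intervalIntegral.integral_mono_on hxb
          (by apply Continuous.intervalIntegrable; continuity) (hIi x₀ b)
        intro y hy
        have := hlb y
        have hyx : |y - x₀| = y - x₀ := abs_of_nonneg (by linarith [hy.1])
        rw [hyx] at this; linarith
      have hcalc : (∫ y in x₀..b, (M + 2 * x₀ - 2 * y)) = M ^ 2 / 4 := by
        rw [intervalIntegral.integral_sub (by apply Continuous.intervalIntegrable; continuity)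
          (by apply Continuous.intervalIntegrable; continuity),
          intervalIntegral.integral_const, intervalIntegral.integral_const_mul,
          integral_id]
        simp only [smul_eq_mul, b]
        ring
      linarith
    linarith
  exact Real.le_sqrt_of_sq_le (by linarith)


lemma y1_l2 (h : ℝ → ℝ) (h0 : ∀ x, 0 ≤ h x) (hlip : LipschitzWith 2 h)
    (hmono : MonotoneOn h (Set.Iic 0)) (hanti : AntitoneOn h (Set.Ici 0))
    (hb : h 0 ≤ Real.sqrt 2) :
    eLpNorm (deriv h) 2 (volume : Measure ℝ) ≤ ENNReal.ofReal (4 * Real.sqrt 2) := by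
  have hcont : Continuous h := hlip.continuous
  -- monotone auxiliary functions
  set g₁ : ℝ → ℝ := fun x => h (min x 0) with hg₁def
  set g₂ : ℝ → ℝ := fun x => -h (max x 0) with hg₂def
  have hg₁ : Monotone g₁ := fun x y hxy =>
    hmono (min_le_right x 0) (min_le_right y 0) (min_le_min hxy le_rfl)
  have hg₂ : Monotone g₂ := fun x y hxy => by
    simp only [g₂, neg_le_neg_iff]
    exact hanti (le_max_right x 0) (le_max_right y 0) (max_le_max hxy le_rfl)
  have hg₁c : Continuous g₁ := hcont.comp (continuous_id.min continuous_const)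
  have hg₂c : Continuous g₂ := (hcont.comp (continuous_id.max continuous_const)).neg
  -- the stieltjes functions agree with g₁, g₂
  have hst₁ : ∀ x, hg₁.stieltjesFunction x = g₁ x := fun x => by
    rw [hg₁.stieltjesFunction_eq]
    exact rightLim_eq_of_tendsto
      ((hg₁c.tendsto x).mono_left nhdsWithin_le_nhds)
  have hst₂ : ∀ x, hg₂.stieltjesFunction x = g₂ x := fun x => by
    rw [hg₂.stieltjesFunction_eq]
    exact rightLim_eq_of_tendsto
      ((hg₂c.tendsto x).mono_left nhdsWithin_le_nhds)
  set μ₁ := hg₁.stieltjesFunction.measure with hμ₁def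
  set μ₂ := hg₂.stieltjesFunction.measure with hμ₂def
  -- measure bounds
  have hμ₁b : μ₁ (Iio 0) ≤ ENNReal.ofReal (Real.sqrt 2) := by
    have hsub : Iio (0:ℝ) ⊆ ⋃ n : ℕ, Ioc (-(n:ℝ)-1) 0 := by
      intro x hx
      simp only [mem_iUnion, mem_Ioc]
      refine ⟨⌈-x⌉₊, ?_, le_of_lt hx⟩
      have := Nat.le_ceil (-x)
      linarith
    refine (measure_mono hsub).trans ?_
    rw [Directed.measure_iUnion (Monotone.directed_le (fun m n hmn => Ioc_subset_Ioc_left (by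
      simp only [sub_le_sub_iff_right, neg_le_neg_iff]; exact_mod_cast hmn)))]
    refine iSup_le fun n => ?_
    rw [hμ₁def, StieltjesFunction.measure_Ioc, hst₁, hst₁]
    refine (ENNReal.ofReal_le_ofReal ?_).trans (ENNReal.ofReal_le_ofReal hb)
    simp only [g₁, min_self]
    linarith [h0 (min (-(n:ℝ)-1) 0)]
  have hμ₂b : μ₂ (Ioi 0) ≤ ENNReal.ofReal (Real.sqrt 2) := by
    have hsub : Ioi (0:ℝ) ⊆ ⋃ n : ℕ, Ioc 0 ((n:ℝ)+1) := by
      intro x hx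
      simp only [mem_iUnion, mem_Ioc]
      refine ⟨⌈x⌉₊, hx, ?_⟩
      have := Nat.le_ceil x
      linarith
    refine (measure_mono hsub).trans ?_
    rw [Directed.measure_iUnion (Monotone.directed_le (fun m n hmn => Ioc_subset_Ioc_right (by
      simp only [add_le_add_iff_right]; exact_mod_cast hmn)))]
    refine iSup_le fun n => ?_
    rw [hμ₂def, StieltjesFunction.measure_Ioc, hst₂, hst₂]
    refine (ENNReal.ofReal_le_ofReal ?_).trans (ENNReal.ofReal_le_ofReal hb)
    simp only [g₂, max_self]
    linarith [h0 (max ((n:ℝ)+1) 0)]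
  -- pointwise derivative bound
  have hdb : ∀ x, |deriv h x| ≤ 2 := by
    intro x
    by_cases hd : DifferentiableAt ℝ h x
    · have h2 : ‖fderiv ℝ h x‖ ≤ (2:ℝ≥0) := norm_fderiv_le_of_lipschitz ℝ hlip
      have : deriv h x = fderiv ℝ h x 1 := rfl
      rw [this, ← Real.norm_eq_abs]
      calc ‖fderiv ℝ h x 1‖ ≤ ‖fderiv ℝ h x‖ * ‖(1:ℝ)‖ := (fderiv ℝ h x).le_opNorm 1
        _ ≤ 2 := by simpa using h2
    · rw [deriv_zero_of_not_differentiableAt hd]; norm_num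
  -- a.e. bounds on the two half-lines
  have aeIio : ∀ᵐ x ∂(volume : Measure ℝ), x ∈ Iio (0:ℝ) →
      (‖deriv h x‖₊ : ℝ≥0∞) ^ (2:ℝ) ≤ 2 * μ₁.rnDeriv volume x := by
    filter_upwards [hg₁.ae_hasDerivAt] with x hx hx0
    set c := (μ₁.rnDeriv volume x).toReal with hc
    have heq : h =ᶠ[nhds x] g₁ := by
      filter_upwards [Iio_mem_nhds hx0] with y hy
      simp only [g₁]
      rw [min_eq_left (le_of_lt hy)]
    have hd : HasDerivAt h c x := hx.congr_of_eventuallyEq heq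
    have hdr : deriv h x = c := hd.deriv
    have hc0 : 0 ≤ c := ENNReal.toReal_nonneg
    have hc2 : c ≤ 2 := by
      have := hdb x
      rw [hdr] at this
      exact (abs_le.1 this).2
    calc (‖deriv h x‖₊ : ℝ≥0∞) ^ (2:ℝ)
        = ENNReal.ofReal c ^ (2:ℝ) := by rw [hdr, ← Real.enorm_eq_ofReal hc0]; rfl
      _ = ENNReal.ofReal (c ^ (2:ℝ)) := ENNReal.ofReal_rpow_of_nonneg hc0 (by norm_num : (0:ℝ) ≤ 2)
      _ ≤ ENNReal.ofReal (2 * c) := ENNReal.ofReal_le_ofReal (by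
          rw [Real.rpow_two]; nlinarith)
      _ = 2 * ENNReal.ofReal c := by
          rw [ENNReal.ofReal_mul (by norm_num)]; norm_num
      _ ≤ 2 * μ₁.rnDeriv volume x := by
          gcongr; exact ENNReal.ofReal_toReal_le
  have aeIoi : ∀ᵐ x ∂(volume : Measure ℝ), x ∈ Ioi (0:ℝ) →
      (‖deriv h x‖₊ : ℝ≥0∞) ^ (2:ℝ) ≤ 2 * μ₂.rnDeriv volume x := by
    filter_upwards [hg₂.ae_hasDerivAt] with x hx hx0
    set c := (μ₂.rnDeriv volume x).toReal with hc
    have heq : h =ᶠ[nhds x] (fun y => -g₂ y) := by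
      filter_upwards [Ioi_mem_nhds hx0] with y hy
      simp only [g₂, neg_neg]
      rw [max_eq_left (le_of_lt hy)]
    have hd : HasDerivAt h (-c) x := (hx.neg).congr_of_eventuallyEq heq
    have hdr : deriv h x = -c := hd.deriv
    have hc0 : 0 ≤ c := ENNReal.toReal_nonneg
    have hc2 : c ≤ 2 := by
      have := hdb x
      rw [hdr, abs_neg] at this
      exact (abs_le.1 this).2
    calc (‖deriv h x‖₊ : ℝ≥0∞) ^ (2:ℝ)
        = ENNReal.ofReal c ^ (2:ℝ) := by
          rw [hdr, nnnorm_neg, ← Real.enorm_eq_ofReal hc0]; rfl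
      _ = ENNReal.ofReal (c ^ (2:ℝ)) := ENNReal.ofReal_rpow_of_nonneg hc0 (by norm_num : (0:ℝ) ≤ 2)
      _ ≤ ENNReal.ofReal (2 * c) := ENNReal.ofReal_le_ofReal (by
          rw [Real.rpow_two]; nlinarith)
      _ = 2 * ENNReal.ofReal c := by
          rw [ENNReal.ofReal_mul (by norm_num)]; norm_num
      _ ≤ 2 * μ₂.rnDeriv volume x := by
          gcongr; exact ENNReal.ofReal_toReal_le
  -- integral bounds
  set F : ℝ → ℝ≥0∞ := fun x => (‖deriv h x‖₊ : ℝ≥0∞) ^ (2:ℝ) with hF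
  have I1 : ∫⁻ x in Iio (0:ℝ), F x ≤ 2 * ENNReal.ofReal (Real.sqrt 2) := by
    calc ∫⁻ x in Iio (0:ℝ), F x ≤ ∫⁻ x in Iio (0:ℝ), 2 * μ₁.rnDeriv volume x :=
          lintegral_mono_ae ((ae_restrict_iff' measurableSet_Iio).2 aeIio)
      _ = 2 * ∫⁻ x in Iio (0:ℝ), μ₁.rnDeriv volume x :=
          lintegral_const_mul 2 (μ₁.measurable_rnDeriv volume)
      _ ≤ 2 * μ₁ (Iio 0) := by gcongr; exact Measure.setLIntegral_rnDeriv_le _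
      _ ≤ 2 * ENNReal.ofReal (Real.sqrt 2) := by gcongr
  have I2 : ∫⁻ x in Ioi (0:ℝ), F x ≤ 2 * ENNReal.ofReal (Real.sqrt 2) := by
    calc ∫⁻ x in Ioi (0:ℝ), F x ≤ ∫⁻ x in Ioi (0:ℝ), 2 * μ₂.rnDeriv volume x :=
          lintegral_mono_ae ((ae_restrict_iff' measurableSet_Ioi).2 aeIoi)
      _ = 2 * ∫⁻ x in Ioi (0:ℝ), μ₂.rnDeriv volume x :=
          lintegral_const_mul 2 (μ₂.measurable_rnDeriv volume)
      _ ≤ 2 * μ₂ (Ioi 0) := by gcongr; exact Measure.setLIntegral_rnDeriv_le _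
      _ ≤ 2 * ENNReal.ofReal (Real.sqrt 2) := by gcongr
  have htot : ∫⁻ x, F x ≤ ENNReal.ofReal (4 * Real.sqrt 2) := by
    have hsplit : ∫⁻ x, F x = (∫⁻ x in Iio (0:ℝ), F x) + ∫⁻ x in Ici (0:ℝ), F x := by
      rw [← lintegral_add_compl F measurableSet_Iio, compl_Iio]
    have hIci : ∫⁻ x in Ici (0:ℝ), F x = ∫⁻ x in Ioi (0:ℝ), F x := by
      rw [← MeasureTheory.restrict_Ioi_eq_restrict_Ici]
    rw [hsplit, hIci]
    calc (∫⁻ x in Iio (0:ℝ), F x) + ∫⁻ x in Ioi (0:ℝ), F x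
        ≤ 2 * ENNReal.ofReal (Real.sqrt 2) + 2 * ENNReal.ofReal (Real.sqrt 2) :=
          add_le_add I1 I2
      _ = ENNReal.ofReal (4 * Real.sqrt 2) := by
          rw [ENNReal.ofReal_mul (by norm_num)]
          rw [show ENNReal.ofReal 4 = 4 by norm_num]
          ring
  -- conclude
  have h1 : (1:ℝ≥0∞) ≤ ENNReal.ofReal (4 * Real.sqrt 2) := by
    rw [show (1:ℝ≥0∞) = ENNReal.ofReal 1 by norm_num]
    apply ENNReal.ofReal_le_ofReal
    nlinarith [Real.sq_sqrt (by norm_num : (0:ℝ) ≤ 2), Real.sqrt_nonneg 2]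
  rw [eLpNorm_eq_lintegral_rpow_enorm_toReal two_ne_zero ENNReal.ofNat_ne_top]
  simp only [ENNReal.toReal_ofNat]
  calc (∫⁻ x, (‖deriv h x‖₊ : ℝ≥0∞) ^ (2:ℝ)) ^ (1/(2:ℝ))
      ≤ (ENNReal.ofReal (4 * Real.sqrt 2)) ^ (1/(2:ℝ)) :=
        ENNReal.rpow_le_rpow htot (by norm_num)
    _ ≤ (ENNReal.ofReal (4 * Real.sqrt 2)) ^ (1:ℝ) :=
        ENNReal.rpow_le_rpow_of_exponent_le h1 (by norm_num)
    _ = ENNReal.ofReal (4 * Real.sqrt 2) := ENNReal.rpow_one _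

/-- Every `h ∈ Ȳ₁` is bounded by `√2`, is differentiable almost everywhere, and its
a.e. derivative has `L²` norm at most `4√2`. -/
theorem y1bar_bounds (h : ℝ → ℝ) (hh : MemY1bar h) :
    (∀ x, h x ≤ Real.sqrt 2) ∧
    (∀ᵐ x ∂(volume : Measure ℝ), DifferentiableAt ℝ h x) ∧
    eLpNorm (deriv h) 2 (volume : Measure ℝ) ≤ ENNReal.ofReal (4 * Real.sqrt 2) := by
  obtain ⟨h0, hlip, hmono, hanti, hint⟩ := hh
  have hb := y1_le_sqrt2 h h0 hlip hint
  exact ⟨hb, hlip.ae_differentiableAt, y1_l2 h h0 hlip hmono hanti (hb 0)⟩
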